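/- Let M be a popular matching in a bipartite graph G with strict preferences, and suppose there exists an augmenting path ρ with respect to M in the subgraph G_M. Then the matching M ⊕ ρ ties with M in a head-to-head election: φ(M ⊕ ρ, M) = φ(M, M ⊕ ρ). Consequently M is not dominant, since M ⊕ ρ is a larger matching that is not less popular than M. -/

import Mathlib

open Classical

/-- A bipartite graph `G = (A ∪ B, E)` with strict preference lists:
`adj` is the edge relation, and each vertex ranks its neighbors by a rank
function (lower rank = more preferred), injective on neighbors. -/
structure PrefSys (A B : Type) where
  adj : A → B → Prop
  rankA : A → B → ℕ
  rankB : B → A → ℕ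
  rankA_inj : ∀ a b b', adj a b → adj a b' → rankA a b = rankA a b' → b = b'
  rankB_inj : ∀ b a a', adj a b → adj a' b → rankB b a = rankB b a' → a = a'

namespace PrefSys

variable {A B : Type} (P : PrefSys A B)

/-- `M` is a matching of `G`: a set of edges, no two sharing a vertex. -/
def IsMatching (M : Finset (A × B)) : Prop :=
  (∀ p ∈ M, P.adj p.1 p.2) ∧
  (∀ p ∈ M, ∀ q ∈ M, p.1 = q.1 → p = q) ∧
  (∀ p ∈ M, ∀ q ∈ M, p.2 = q.2 → p = q)

/-- Vertex `a ∈ A` prefers matching `M` to matching `M'`: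
`a` is matched in `M` and either unmatched in `M'` or matched to a strictly
worse partner in `M'`. -/
def prefA (M M' : Finset (A × B)) (a : A) : Prop :=
  ∃ b, (a, b) ∈ M ∧ ∀ b', (a, b') ∈ M' → P.rankA a b < P.rankA a b'

/-- Vertex `b ∈ B` prefers matching `M` to matching `M'`. -/
def prefB (M M' : Finset (A × B)) (b : B) : Prop :=
  ∃ a, (a, b) ∈ M ∧ ∀ a', (a', b) ∈ M' → P.rankB b a < P.rankB b a'

/-- `φ(M, M')`: the number of vertices preferring `M` to `M'`. -/
noncomputable def phi (M M' : Finset (A × B)) : ℕ :=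
  Nat.card {a : A // P.prefA M M' a} + Nat.card {b : B // P.prefB M M' b}

/-- A matching is popular if it never loses a head-to-head election. -/
def Popular (M : Finset (A × B)) : Prop :=
  P.IsMatching M ∧ ∀ M', P.IsMatching M' → P.phi M' M ≤ P.phi M M'

/-- `a`'s vote on the edge `(a,b)` versus its `M`-partner is `+`. -/
def voteAplus (M : Finset (A × B)) (a : A) (b : B) : Prop :=
  ∀ b', (a, b') ∈ M → P.rankA a b < P.rankA a b'

/-- `b`'s vote on the edge `(a,b)` versus its `M`-partner is `+`. -/
def voteBplus (M : Finset (A × B)) (a : A) (b : B) : Prop :=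
  ∀ a', (a', b) ∈ M → P.rankB b a < P.rankB b a'

/-- `(a,b)` is a blocking edge (an edge outside `M` labeled `(+,+)`). -/
def Blocking (M : Finset (A × B)) (a : A) (b : B) : Prop :=
  P.adj a b ∧ (a, b) ∉ M ∧ P.voteAplus M a b ∧ P.voteBplus M a b

/-- A stable matching: a matching with no blocking edge. -/
def Stable (M : Finset (A × B)) : Prop :=
  P.IsMatching M ∧ ∀ a b, ¬ P.Blocking M a b

/-- A dominant matching: popular, and more popular than every larger matching. -/
def Dominant (M : Finset (A × B)) : Prop :=
  P.Popular M ∧ ∀ M', P.IsMatching M' → M.card < M'.card → P.phi M' M < P.phi M M'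

/-- The edge `(a,b)` survives in the subgraph `G_M` (i.e. it is an edge of `G`
that is in `M` or is not labeled `(-,-)`). -/
def inGM (M : Finset (A × B)) (a : A) (b : B) : Prop :=
  P.adj a b ∧ ((a, b) ∈ M ∨ P.voteAplus M a b ∨ P.voteBplus M a b)

end PrefSys

namespace PrefSys

variable {A B : Type} (P : PrefSys A B)

/-- Vertices of `G`, as a sum type. -/
abbrev V (A B : Type) := Sum A B

/-- Adjacency in the subgraph `G_M` (symmetrized). -/
def vAdjGM (M : Finset (A × B)) : V A B → V A B → Prop
  | .inl a, .inr b => P.inGM M a b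
  | .inr b, .inl a => P.inGM M a b
  | _, _ => False

/-- The (unordered) pair `{x,y}` is an edge of the matching `M`. -/
def vInM (M : Finset (A × B)) : V A B → V A B → Prop
  | .inl a, .inr b => (a, b) ∈ M
  | .inr b, .inl a => (a, b) ∈ M
  | _, _ => False

/-- The (unordered) pair `{x,y}` is an edge labeled `(+,+)` wrt `M`. -/
def vPlusPlus (M : Finset (A × B)) : V A B → V A B → Prop
  | .inl a, .inr b => P.Blocking M a b
  | .inr b, .inl a => P.Blocking M a b
  | _, _ => False

/-- The vertex `x` is matched in `M`. -/
def vMatched (M : Finset (A × B)) : V A B → Prop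
  | .inl a => ∃ b, (a, b) ∈ M
  | .inr b => ∃ a, (a, b) ∈ M

/-- The list of consecutive pairs of a vertex list. -/
def edgesOf (v : List (V A B)) : List (V A B × V A B) := v.zip v.tail

/-- An alternating path with respect to `M` in the subgraph `G_M`:
a list of distinct vertices, consecutive ones adjacent in `G_M`, whose edges
alternate between matching and non-matching edges. -/
def IsAltPath (M : Finset (A × B)) (v : List (V A B)) : Prop :=
  v.Nodup ∧ v.Chain' (P.vAdjGM M) ∧
  (edgesOf v).Chain' (fun e f => vInM M e.1 e.2 ↔ ¬ vInM M f.1 f.2)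

/-- An augmenting path with respect to `M` in `G_M`: an alternating path with
at least one edge, both of whose endpoints are unmatched in `M`. -/
def IsAugPath (M : Finset (A × B)) (v : List (V A B)) : Prop :=
  P.IsAltPath M v ∧ 2 ≤ v.length ∧
  (∀ x, v.head? = some x → ¬ vMatched M x) ∧
  (∀ x, v.getLast? = some x → ¬ vMatched M x)

/-- The edges of a cycle given by a vertex list (consecutive pairs plus the
closing edge from the last vertex to the first). -/
def cycEdgesOf (v : List (V A B)) : List (V A B × V A B) :=
  match v.head?, v.getLast? with
  | some x, some y => edgesOf v ++ [(y, x)]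
  | _, _ => []

/-- An alternating cycle with respect to `M` in the subgraph `G_M`. -/
def IsAltCycle (M : Finset (A × B)) (v : List (V A B)) : Prop :=
  v.Nodup ∧ 4 ≤ v.length ∧
  (∀ e ∈ cycEdgesOf v, P.vAdjGM M e.1 e.2) ∧
  (cycEdgesOf v).Chain' (fun e f => vInM M e.1 e.2 ↔ ¬ vInM M f.1 f.2)

/-- The set of `G`-edges (as pairs in `A × B`) used by a list of vertex pairs. -/
noncomputable def edgeFinset (l : List (V A B × V A B)) : Finset (A × B) :=
  (l.filterMap (fun e => match e with
    | (.inl a, .inr b) => some (a, b)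
    | (.inr b, .inl a) => some (a, b)
    | _ => none)).toFinset

/-- `M ⊕ ρ`: switch `M` along the path with vertex list `v`. -/
noncomputable def augment (M : Finset (A × B)) (v : List (V A B)) : Finset (A × B) :=
  symmDiff M (edgeFinset (edgesOf v))

end PrefSys

set_option maxHeartbeats 1000000 in
open PrefSys in
/-- if `M` is popular and `ρ` is an augmenting path wrt `M` in
`G_M`, then `M ⊕ ρ` ties with `M`, and consequently `M` is not dominant. -/
theorem aug_path_gives_tie {A B : Type} [Fintype A] [Fintype B]
    (P : PrefSys A B) (M : Finset (A × B)) (hM : P.Popular M)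
    (v : List (V A B)) (hv : P.IsAugPath M v) :
    P.phi (augment M v) M = P.phi M (augment M v) ∧ ¬ P.Dominant M := by
  classical
  obtain ⟨⟨nd, hadj, halt⟩, hlen, hhead, hlast⟩ := hv
  obtain ⟨hMadj, hM1, hM2⟩ := hM.1
  set E : Finset (A × B) := edgeFinset (edgesOf v) with hE
  set M' : Finset (A × B) := augment M v with hM'def
  have hMM' : ∀ e : A × B, e ∈ M' ↔ (e ∈ M ∧ e ∉ E) ∨ (e ∈ E ∧ e ∉ M) := by
    intro e
    rw [hM'def, PrefSys.augment, ← hE, Finset.mem_symmDiff]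
  obtain ⟨m, hm⟩ : ∃ m, v.length = m + 2 := ⟨v.length - 2, by omega⟩
  have hvne : v ≠ [] := by
    intro h; rw [h] at hlen; simp at hlen
  set d : V A B := v.head hvne with hd
  set w : ℕ → V A B := fun i => v.getD i d with hw
  have hwget : ∀ i (h : i < v.length), w i = v.get ⟨i, h⟩ := by
    intro i h
    rw [hw]
    exact (List.getD_eq_getElem v d h).trans (List.get_eq_getElem (l := v) (i := ⟨i, h⟩)).symm
  -- Nodup: injectivity of w
  have ND : ∀ i j, i < v.length → j < v.length → w i = w j → i = j := by
    intro i j hi hj hij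
    rw [hwget i hi, hwget j hj] at hij
    have := (List.nodup_iff_injective_get.mp nd) hij
    exact congrArg Fin.val this
  -- adjacency of consecutive vertices
  have F1 : ∀ i, i + 1 < v.length → P.vAdjGM M (w i) (w (i+1)) := by
    intro i h
    have := List.isChain_iff_getElem.mp hadj i (by omega)
    rw [hwget i (by omega), hwget (i+1) h]; exact this
  -- edges of v
  have hedgelen : (edgesOf v).length = v.length - 1 := by
    rw [PrefSys.edgesOf, List.length_zip, List.length_tail]; omega
  have hedgeget : ∀ i (h : i + 1 < v.length), (edgesOf v).get ⟨i, by rw [hedgelen]; omega⟩ = (w i, w (i+1)) := by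
    intro i h
    rw [hwget i (by omega), hwget (i+1) h]
    simp only [PrefSys.edgesOf, List.get_eq_getElem, List.getElem_zip, List.getElem_tail]
  -- alternation step
  have F2 : ∀ i, i + 2 < v.length →
      (vInM M (w i) (w (i+1)) ↔ ¬ vInM M (w (i+1)) (w (i+2))) := by
    intro i h
    have := List.isChain_iff_getElem.mp halt i (by rw [hedgelen]; omega)
    have hg1 := hedgeget i (by omega); have hg2 := hedgeget (i+1) (by omega)
    simp only [List.get_eq_getElem] at hg1 hg2
    rwa [hg1, hg2] at this
  -- endpoints unmatched
  have F3a : ¬ vMatched M (w 0) := by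
    apply hhead
    rw [List.head?_eq_head hvne, hwget 0 (by omega)]
    simp [List.get_eq_getElem, List.head_eq_getElem]
  have F3b : ¬ vMatched M (w (m+1)) := by
    apply hlast
    rw [List.getLast?_eq_getLast hvne, hwget (m+1) (by omega)]
    simp [List.get_eq_getElem, List.getLast_eq_getElem, hm]
  -- vInM basic facts
  have VM : ∀ (N : Finset (A × B)) (X Y : V A B), vInM N X Y → vMatched N X ∧ vMatched N Y := by
    intro N X Y h
    cases X <;> cases Y <;> simp [PrefSys.vInM] at h <;>
      exact ⟨⟨_, h⟩, ⟨_, h⟩⟩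
  have Vsymm : ∀ (N : Finset (A × B)) (X Y : V A B), vInM N X Y ↔ vInM N Y X := by
    intro N X Y; cases X <;> cases Y <;> simp [PrefSys.vInM]
  have U : ∀ (X Y Y' : V A B), vInM M X Y → vInM M X Y' → Y = Y' := by
    intro X Y Y' h1 h2
    cases X <;> cases Y <;> cases Y' <;> simp [PrefSys.vInM] at h1 h2 ⊢
    · exact congrArg Prod.snd (hM1 _ h1 _ h2 rfl)
    · exact congrArg Prod.fst (hM2 _ h1 _ h2 rfl)
  -- Step 1: parity of matching edges
  have Step1 : ∀ i, i + 1 < v.length → (vInM M (w i) (w (i+1)) ↔ Odd i) := by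
    intro i
    induction i with
    | zero =>
      intro h
      simp only [Nat.odd_iff]
      constructor
      · intro hin; exact absurd ((VM M _ _ hin).1) F3a
      · omega
    | succ k ih =>
      intro h
      have hk := F2 k (by omega)
      have hik := ih (by omega)
      rw [Nat.odd_add_one, ← hik]
      tauto
  -- Step 2 : m is even
  have Step2 : Even m := by
    have h1 := Step1 m (by omega)
    rw [← Nat.not_odd_iff_even, ← h1]
    intro hin
    exact F3b ((VM M _ _ hin).2)
  have hEvenlt : ∀ i, i < v.length → Even i → i + 1 < v.length := by
    intro i hi he
    have h2 := Nat.even_iff.mp he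
    have h3 := Nat.even_iff.mp Step2
    omega
  -- Step 3: M-partners of path vertices
  have Step3 : ∀ i, i < v.length → ∀ Z, vInM M (w i) Z →
      (Odd i ∧ i + 1 < v.length ∧ Z = w (i+1)) ∨ (Even i ∧ 0 < i ∧ Z = w (i-1)) := by
    intro i hi Z hZ
    rcases Nat.even_or_odd i with he | ho
    · right
      have hipos : 0 < i := by
        rcases Nat.eq_zero_or_pos i with h0 | h0
        · rw [h0] at hZ; exact absurd ((VM M _ _ hZ).1) F3a
        · exact h0
      refine ⟨he, hipos, ?_⟩
      have hodd : Odd (i-1) := by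
        have h2 := Nat.even_iff.mp he; rw [Nat.odd_iff]; omega
      have h1 : vInM M (w (i-1)) (w (i-1+1)) := (Step1 (i-1) (by omega)).mpr hodd
      rw [show i - 1 + 1 = i from by omega] at h1
      exact U _ _ _ hZ ((Vsymm M _ _).mp h1)
    · left
      have hine : i ≠ m + 1 := by
        intro h; rw [h] at hZ; exact absurd ((VM M _ _ hZ).1) F3b
      have hlt : i + 1 < v.length := by
        have h2 := Nat.odd_iff.mp ho; have h3 := Nat.even_iff.mp Step2; omega
      refine ⟨ho, hlt, ?_⟩
      exact U _ _ _ hZ ((Step1 i hlt).mpr ho)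
  -- E membership
  have hmemE : ∀ a b, ((a,b) ∈ E ↔ ∃ i, i + 1 < v.length ∧
      ((w i = Sum.inl a ∧ w (i+1) = Sum.inr b) ∨ (w i = Sum.inr b ∧ w (i+1) = Sum.inl a))) := by
    intro a b
    rw [hE, PrefSys.edgeFinset, List.mem_toFinset, List.mem_filterMap]
    constructor
    · rintro ⟨e, he, hfe⟩
      obtain ⟨i, hilt, hie⟩ := List.mem_iff_getElem.mp he
      have hilen : i + 1 < v.length := by
        rw [hedgelen] at hilt; omega
      have hie2 : e = (w i, w (i+1)) := by
        rw [← hie, ← hedgeget i hilen]; simp [List.get_eq_getElem]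
      refine ⟨i, hilen, ?_⟩
      rw [hie2] at hfe
      cases h1 : w i <;> cases h2 : w (i+1) <;> rw [h1, h2] at hfe <;>
        simp only [Option.some.injEq, Prod.mk.injEq, reduceCtorEq] at hfe
      · exact Or.inl ⟨by rw [hfe.1], by rw [hfe.2]⟩
      · exact Or.inr ⟨by rw [hfe.2], by rw [hfe.1]⟩
    · rintro ⟨i, hi, hcase⟩
      refine ⟨(w i, w (i+1)), ?_, ?_⟩
      · rw [← hedgeget i hi]; exact List.get_mem _ _
      · rcases hcase with ⟨h1, h2⟩ | ⟨h1, h2⟩ <;> rw [h1, h2]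
  have PE : ∀ X Y, vInM E X Y ↔ ∃ i, i + 1 < v.length ∧
      ((w i = X ∧ w (i+1) = Y) ∨ (w i = Y ∧ w (i+1) = X)) := by
    intro X Y
    cases X with
    | inl a =>
      cases Y with
      | inl a' =>
        simp only [PrefSys.vInM]
        constructor
        · intro h; exact h.elim
        · rintro ⟨i, hi, ⟨h1, h2⟩ | ⟨h1, h2⟩⟩ <;>
          · have := F1 i hi; rw [h1, h2] at this; exact this.elim
      | inr b =>
        show (a, b) ∈ E ↔ _
        rw [hmemE a b]
    | inr b =>
      cases Y with
      | inl a =>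
        show (a, b) ∈ E ↔ _
        rw [hmemE a b]
        constructor <;> rintro ⟨i, hi, h⟩ <;> exact ⟨i, hi, h.symm⟩
      | inr b' =>
        simp only [PrefSys.vInM]
        constructor
        · intro h; exact h.elim
        · rintro ⟨i, hi, ⟨h1, h2⟩ | ⟨h1, h2⟩⟩ <;>
          · have := F1 i hi; rw [h1, h2] at this; exact this.elim
  -- V-level membership in M'
  have Step5 : ∀ X Y, vInM M' X Y ↔
      ((vInM M X Y ∧ ¬ vInM E X Y) ∨ (vInM E X Y ∧ ¬ vInM M X Y)) := by
    intro X Y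
    cases X <;> cases Y <;> simp only [PrefSys.vInM] <;> try tauto
    all_goals exact hMM' _
  set sig : ℕ → ℕ := fun i => if Even i then i + 1 else i - 1 with hsig
  have hsig_even : ∀ i, Even i → sig i = i + 1 := by
    intro i h; rw [hsig]; simp [h]
  have hsig_odd : ∀ i, Odd i → sig i = i - 1 := by
    intro i h; rw [hsig]; simp [Nat.not_even_iff_odd.mpr h]
  -- Step 6: each path vertex is matched in M' to w (sig i)
  have Step6 : ∀ i, i < v.length → vInM M' (w i) (w (sig i)) := by
    intro i hi
    rcases Nat.even_or_odd i with he | ho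
    · rw [hsig_even i he]
      have hlt := hEvenlt i hi he
      apply (Step5 _ _).mpr
      refine Or.inr ⟨(PE _ _).mpr ⟨i, hlt, Or.inl ⟨rfl, rfl⟩⟩, ?_⟩
      rw [Step1 i hlt]
      exact Nat.not_odd_iff_even.mpr he
    · rw [hsig_odd i ho]
      have hpos : 0 < i := ho.pos
      have hi1 : i - 1 + 1 = i := by omega
      apply (Step5 _ _).mpr
      refine Or.inr ⟨(PE _ _).mpr ⟨i - 1, by omega, Or.inr ⟨rfl, by rw [hi1]⟩⟩, ?_⟩
      intro hmm2
      have : vInM M (w (i-1)) (w (i-1+1)) := by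
        rw [hi1]; exact (Vsymm M _ _).mp hmm2
      have hodd := (Step1 (i-1) (by omega)).mp this
      have h2 := Nat.odd_iff.mp hodd
      have h3 := Nat.odd_iff.mp ho
      omega
  -- Step 7: uniqueness of M'-partner of a path vertex
  have Step7 : ∀ i, i < v.length → ∀ Z, vInM M' (w i) Z → Z = w (sig i) := by
    intro i hi Z hZ
    rcases (Step5 _ _).mp hZ with ⟨hm0, hne⟩ | ⟨he0, hnm⟩
    · exfalso
      rcases Step3 i hi Z hm0 with ⟨hodd, hlt, rfl⟩ | ⟨heven, hpos, rfl⟩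
      · exact hne ((PE _ _).mpr ⟨i, hlt, Or.inl ⟨rfl, rfl⟩⟩)
      · exact hne ((PE _ _).mpr ⟨i - 1, by omega, Or.inr ⟨rfl, by rw [show i - 1 + 1 = i from by omega]⟩⟩)
    · rcases (PE _ _).mp he0 with ⟨j, hj, ⟨hj1, hj2⟩ | ⟨hj1, hj2⟩⟩
      · have hji : j = i := ND j i (by omega) hi hj1
        subst hji
        rcases Nat.even_or_odd j with he | ho
        · rw [hsig_even j he]; exact hj2.symm
        · exact absurd ((Step1 j hj).mpr ho) (by rw [hj2]; exact hnm)
      · have hji : j + 1 = i := ND (j+1) i hj hi hj2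
        rcases Nat.even_or_odd j with he | ho
        · have hio : Odd i := by
            rw [← hji]; exact Nat.odd_add_one.mpr (Nat.not_odd_iff_even.mpr he)
          rw [hsig_odd i hio, show i - 1 = j from by omega]
          exact hj1.symm
        · exfalso
          apply hnm
          have h1 := (Step1 j hj).mpr ho
          rw [hj1, hj2] at h1
          exact (Vsymm M _ _).mp h1
  -- endpoints of E-edges are on the path
  have hEpath : ∀ a b, (a,b) ∈ E →
      (∃ i, i < v.length ∧ w i = Sum.inl a) ∧ (∃ i, i < v.length ∧ w i = Sum.inr b) := by
    intro a b hab
    rcases (hmemE a b).mp hab with ⟨i, hi, ⟨h1, h2⟩ | ⟨h1, h2⟩⟩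
    · exact ⟨⟨i, by omega, h1⟩, ⟨i+1, hi, h2⟩⟩
    · exact ⟨⟨i+1, hi, h2⟩, ⟨i, by omega, h1⟩⟩
  -- M' is a matching
  have hM'adj : ∀ p ∈ M', P.adj p.1 p.2 := by
    rintro ⟨a, b⟩ hp
    rcases (hMM' _).mp hp with ⟨h1, _⟩ | ⟨h1, _⟩
    · exact hMadj _ h1
    · rcases (hmemE a b).mp h1 with ⟨i, hi, ⟨e1, e2⟩ | ⟨e1, e2⟩⟩ <;>
      · have hadj2 := F1 i hi
        rw [e1, e2] at hadj2
        exact hadj2.1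
  have hM'1 : ∀ p ∈ M', ∀ q ∈ M', p.1 = q.1 → p = q := by
    rintro ⟨a, b⟩ hp ⟨a', b'⟩ hq hfst
    simp only at hfst
    subst hfst
    by_cases hon : ∃ i, i < v.length ∧ w i = Sum.inl a
    · obtain ⟨i, hi, hwi⟩ := hon
      have h1 : vInM M' (w i) (Sum.inr b) := by rw [hwi]; exact hp
      have h2 : vInM M' (w i) (Sum.inr b') := by rw [hwi]; exact hq
      have := (Step7 i hi _ h1).trans (Step7 i hi _ h2).symm
      simp only [Sum.inr.injEq] at this
      rw [this]
    · have hbM : (a, b) ∈ M := by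
        rcases (hMM' _).mp hp with ⟨h1, _⟩ | ⟨h1, _⟩
        · exact h1
        · exact absurd (hEpath a b h1).1 hon
      have hb'M : (a, b') ∈ M := by
        rcases (hMM' _).mp hq with ⟨h1, _⟩ | ⟨h1, _⟩
        · exact h1
        · exact absurd (hEpath a b' h1).1 hon
      exact hM1 _ hbM _ hb'M rfl
  have hM'2 : ∀ p ∈ M', ∀ q ∈ M', p.2 = q.2 → p = q := by
    rintro ⟨a, b⟩ hp ⟨a', b'⟩ hq hsnd
    simp only at hsnd
    subst hsnd
    by_cases hon : ∃ i, i < v.length ∧ w i = Sum.inr b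
    · obtain ⟨i, hi, hwi⟩ := hon
      have h1 : vInM M' (w i) (Sum.inl a) := by rw [hwi]; exact hp
      have h2 : vInM M' (w i) (Sum.inl a') := by rw [hwi]; exact hq
      have := (Step7 i hi _ h1).trans (Step7 i hi _ h2).symm
      simp only [Sum.inl.injEq] at this
      rw [this]
    · have hbM : (a, b) ∈ M := by
        rcases (hMM' _).mp hp with ⟨h1, _⟩ | ⟨h1, _⟩
        · exact h1
        · exact absurd (hEpath a b h1).2 hon
      have hb'M : (a', b) ∈ M := by
        rcases (hMM' _).mp hq with ⟨h1, _⟩ | ⟨h1, _⟩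
        · exact h1
        · exact absurd (hEpath a' b h1).2 hon
      exact hM2 _ hbM _ hb'M rfl
  have hM'match : P.IsMatching M' := ⟨hM'adj, hM'1, hM'2⟩
  -- every M-matched vertex is M'-matched
  have matchedA : ∀ a : A, (∃ b, (a,b) ∈ M) → (∃ b, (a,b) ∈ M') := by
    rintro a ⟨b, hb⟩
    by_cases hon : ∃ i, i < v.length ∧ w i = Sum.inl a
    · obtain ⟨i, hi, hwi⟩ := hon
      have h6 := Step6 i hi
      rw [hwi] at h6
      cases h2 : w (sig i) with
      | inl a' => rw [h2] at h6; exact h6.elim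
      | inr b' => rw [h2] at h6; exact ⟨b', h6⟩
    · refine ⟨b, (hMM' _).mpr (Or.inl ⟨hb, fun hEb => hon (hEpath a b hEb).1⟩)⟩
  have matchedB : ∀ b : B, (∃ a, (a,b) ∈ M) → (∃ a, (a,b) ∈ M') := by
    rintro b ⟨a, ha⟩
    by_cases hon : ∃ i, i < v.length ∧ w i = Sum.inr b
    · obtain ⟨i, hi, hwi⟩ := hon
      have h6 := Step6 i hi
      rw [hwi] at h6
      cases h2 : w (sig i) with
      | inl a' => rw [h2] at h6; exact ⟨a', h6⟩
      | inr b' => rw [h2] at h6; exact h6.elim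
    · refine ⟨a, (hMM' _).mpr (Or.inl ⟨ha, fun hEb => hon (hEpath a b hEb).2⟩)⟩
  -- cardinality
  have hcard : M.card < M'.card := by
    have himgM1 : (M.image Prod.fst).card = M.card :=
      Finset.card_image_of_injOn (fun p hp q hq hpq => hM1 p hp q hq hpq)
    have himgM2 : (M.image Prod.snd).card = M.card :=
      Finset.card_image_of_injOn (fun p hp q hq hpq => hM2 p hp q hq hpq)
    have himgM'1 : (M'.image Prod.fst).card = M'.card :=
      Finset.card_image_of_injOn (fun p hp q hq hpq => hM'1 p hp q hq hpq)
    have himgM'2 : (M'.image Prod.snd).card = M'.card :=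
      Finset.card_image_of_injOn (fun p hp q hq hpq => hM'2 p hp q hq hpq)
    have hsubA : M.image Prod.fst ⊆ M'.image Prod.fst := by
      intro a ha
      obtain ⟨p, hp, hpa⟩ := Finset.mem_image.mp ha
      obtain ⟨b', hb'⟩ := matchedA a ⟨p.2, by rw [← hpa]; exact hp⟩
      exact Finset.mem_image.mpr ⟨(a, b'), hb', rfl⟩
    have hsubB : M.image Prod.snd ⊆ M'.image Prod.snd := by
      intro b hb
      obtain ⟨p, hp, hpb⟩ := Finset.mem_image.mp hb
      obtain ⟨a', ha'⟩ := matchedB b ⟨p.1, by rw [← hpb]; exact hp⟩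
      exact Finset.mem_image.mpr ⟨(a', b), ha', rfl⟩
    have h60 := Step6 0 (by omega)
    cases h0 : w 0 with
    | inl a0 =>
      rw [h0] at h60
      have ha0M' : a0 ∈ M'.image Prod.fst := by
        cases h2 : w (sig 0) with
        | inl a' => rw [h2] at h60; exact h60.elim
        | inr b' =>
          rw [h2] at h60
          exact Finset.mem_image.mpr ⟨(a0, b'), h60, rfl⟩
      have ha0M : a0 ∉ M.image Prod.fst := by
        intro hmem
        obtain ⟨p, hp, hpa⟩ := Finset.mem_image.mp hmem
        apply F3a
        rw [h0]
        exact ⟨p.2, by rw [← hpa]; exact hp⟩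
      have := Finset.card_lt_card ((Finset.ssubset_iff_of_subset hsubA).mpr ⟨a0, ha0M', ha0M⟩)
      omega
    | inr b0 =>
      rw [h0] at h60
      have hb0M' : b0 ∈ M'.image Prod.snd := by
        cases h2 : w (sig 0) with
        | inl a' =>
          rw [h2] at h60
          exact Finset.mem_image.mpr ⟨(a', b0), h60, rfl⟩
        | inr b' => rw [h2] at h60; exact h60.elim
      have hb0M : b0 ∉ M.image Prod.snd := by
        intro hmem
        obtain ⟨p, hp, hpb⟩ := Finset.mem_image.mp hmem
        apply F3a
        rw [h0]
        exact ⟨p.1, by rw [← hpb]; exact hp⟩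
      have := Finset.card_lt_card ((Finset.ssubset_iff_of_subset hsubB).mpr ⟨b0, hb0M', hb0M⟩)
      omega
  -- vertex-level preference predicates
  set p : V A B → Prop := fun X => match X with
    | Sum.inl a => P.prefA M M' a
    | Sum.inr b => P.prefB M M' b with hp
  set q : V A B → Prop := fun X => match X with
    | Sum.inl a => P.prefA M' M a
    | Sum.inr b => P.prefB M' M b with hq
  -- every vertex preferring M to M' lies on the path
  have C1 : ∀ X : V A B, p X → ∃ i, i < v.length ∧ w i = X := by
    intro X hX
    cases X with
    | inl a =>
      obtain ⟨b, hbM, hbeats⟩ := hX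
      have hnot : (a, b) ∉ M' := fun h => lt_irrefl _ (hbeats b h)
      have hEab : (a, b) ∈ E := by
        by_contra hne
        exact hnot ((hMM' _).mpr (Or.inl ⟨hbM, hne⟩))
      exact (hEpath a b hEab).1
    | inr b =>
      obtain ⟨a, haM, hbeats⟩ := hX
      have hnot : (a, b) ∉ M' := fun h => lt_irrefl _ (hbeats a h)
      have hEab : (a, b) ∈ E := by
        by_contra hne
        exact hnot ((hMM' _).mpr (Or.inl ⟨haM, hne⟩))
      exact (hEpath a b hEab).2
  -- vote transfer along a non-matching path edge
  have key2 : ∀ a b, P.inGM M a b → (a, b) ∉ M → (a, b) ∈ M' → ∀ X Y : V A B,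
      ((X = Sum.inl a ∧ Y = Sum.inr b) ∨ (X = Sum.inr b ∧ Y = Sum.inl a)) → p X → q Y := by
    intro a b hG hnM hM'ab X Y hor hX
    have hvote : P.voteAplus M a b ∨ P.voteBplus M a b := by
      rcases hG.2 with h | h | h
      · exact absurd h hnM
      · exact Or.inl h
      · exact Or.inr h
    rcases hor with ⟨rfl, rfl⟩ | ⟨rfl, rfl⟩
    · obtain ⟨b₀, hb₀, hbeats⟩ := hX
      have hvB : P.voteBplus M a b := by
        rcases hvote with hva | hvb
        · have h1 := hva b₀ hb₀
          have h2 := hbeats b hM'ab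
          omega
        · exact hvb
      exact ⟨a, hM'ab, hvB⟩
    · obtain ⟨a₀, ha₀, hbeats⟩ := hX
      have hvA : P.voteAplus M a b := by
        rcases hvote with hva | hvb
        · exact hva
        · have h1 := hvb a₀ ha₀
          have h2 := hbeats a hM'ab
          omega
      exact ⟨b, hM'ab, hvA⟩
  have key : ∀ j, j + 1 < v.length → Even j → ∀ X Y : V A B,
      ((X = w j ∧ Y = w (j+1)) ∨ (X = w (j+1) ∧ Y = w j)) → p X → q Y := by
    intro j hj hje X Y hor hX
    have hadjj := F1 j hj
    have hnm : ¬ vInM M (w j) (w (j+1)) := by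
      rw [Step1 j hj]; exact Nat.not_odd_iff_even.mpr hje
    have hm' : vInM M' (w j) (w (j+1)) :=
      (Step5 _ _).mpr (Or.inr ⟨(PE _ _).mpr ⟨j, hj, Or.inl ⟨rfl, rfl⟩⟩, hnm⟩)
    cases h1 : w j with
    | inl a =>
      cases h2 : w (j+1) with
      | inl a' => rw [h1, h2] at hadjj; exact hadjj.elim
      | inr b =>
        rw [h1, h2] at hadjj hnm hm'
        refine key2 a b hadjj hnm hm' X Y ?_ hX
        rcases hor with ⟨hX1, hY1⟩ | ⟨hX1, hY1⟩
        · exact Or.inl ⟨by rw [hX1, h1], by rw [hY1, h2]⟩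
        · exact Or.inr ⟨by rw [hX1, h2], by rw [hY1, h1]⟩
    | inr b =>
      cases h2 : w (j+1) with
      | inr b' => rw [h1, h2] at hadjj; exact hadjj.elim
      | inl a =>
        rw [h1, h2] at hadjj hnm hm'
        refine key2 a b hadjj ?_ ?_ X Y ?_ hX
        · exact hnm
        · exact hm'
        · rcases hor with ⟨hX1, hY1⟩ | ⟨hX1, hY1⟩
          · exact Or.inr ⟨by rw [hX1, h1], by rw [hY1, h2]⟩
          · exact Or.inl ⟨by rw [hX1, h2], by rw [hY1, h1]⟩
  have C2 : ∀ i, i < v.length → p (w i) → q (w (sig i)) := by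
    intro i hi hX
    rcases Nat.even_or_odd i with he | ho
    · rw [hsig_even i he]
      exact key i (hEvenlt i hi he) he _ _ (Or.inl ⟨rfl, rfl⟩) hX
    · rw [hsig_odd i ho]
      have hpos := ho.pos
      have h1 : i - 1 + 1 = i := by omega
      have hje : Even (i - 1) := by
        rw [Nat.even_iff]; have := Nat.odd_iff.mp ho; omega
      refine key (i-1) (by omega) hje (w i) (w (i-1)) (Or.inr ⟨?_, rfl⟩) hX
      rw [h1]
  have hsiglt : ∀ i, i < v.length → sig i < v.length := by
    intro i hi
    rcases Nat.even_or_odd i with he | ho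
    · rw [hsig_even i he]; exact hEvenlt i hi he
    · rw [hsig_odd i ho]; omega
  have hsiginj : ∀ i j, i < v.length → j < v.length → sig i = sig j → i = j := by
    intro i j hi hj hij
    rcases Nat.even_or_odd i with he | ho <;> rcases Nat.even_or_odd j with he' | ho'
    · rw [hsig_even i he, hsig_even j he'] at hij; omega
    · rw [hsig_even i he, hsig_odd j ho'] at hij
      have := Nat.even_iff.mp he; have := Nat.odd_iff.mp ho'; omega
    · rw [hsig_odd i ho, hsig_even j he'] at hij
      have := Nat.odd_iff.mp ho; have := Nat.even_iff.mp he'; omega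
    · rw [hsig_odd i ho, hsig_odd j ho'] at hij
      have := Nat.odd_iff.mp ho; have := Nat.odd_iff.mp ho'; omega
  -- counting
  have e1 : {X : V A B // p X} ≃ {a // P.prefA M M' a} ⊕ {b // P.prefB M M' b} :=
    Equiv.subtypeSum
  have e2 : {X : V A B // q X} ≃ {a // P.prefA M' M a} ⊕ {b // P.prefB M' M b} :=
    Equiv.subtypeSum
  have hphi1 : P.phi M M' = Nat.card {X : V A B // p X} := by
    rw [PrefSys.phi, Nat.card_congr e1, Nat.card_sum]
  have hphi2 : P.phi M' M = Nat.card {X : V A B // q X} := by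
    rw [PrefSys.phi, Nat.card_congr e2, Nat.card_sum]
  have hfin : Nat.card {X : V A B // p X} ≤ Nat.card {X : V A B // q X} := by
    have hch : ∀ s : {X : V A B // p X}, ∃ i, i < v.length ∧ w i = s.1 :=
      fun s => C1 s.1 s.2
    choose idx hidx1 hidx2 using hch
    have hinj : Function.Injective
        (fun s : {X : V A B // p X} =>
          (⟨w (sig (idx s)), C2 (idx s) (hidx1 s) (by rw [hidx2 s]; exact s.2)⟩ :
            {X : V A B // q X})) := by
      intro s t hst
      have h1 : w (sig (idx s)) = w (sig (idx t)) := congrArg Subtype.val hst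
      have h2 : sig (idx s) = sig (idx t) :=
        ND _ _ (hsiglt _ (hidx1 s)) (hsiglt _ (hidx1 t)) h1
      have h3 : idx s = idx t := hsiginj _ _ (hidx1 s) (hidx1 t) h2
      apply Subtype.ext
      rw [← hidx2 s, ← hidx2 t, h3]
    exact Nat.card_le_card_of_injective _ hinj
  have le1 := hM.2 M' hM'match
  have le2 : P.phi M M' ≤ P.phi M' M := by rw [hphi1, hphi2]; exact hfin
  have tie : P.phi M' M = P.phi M M' := le_antisymm le1 le2
  refine ⟨tie, ?_⟩
  rintro ⟨hpop, hdom⟩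
  have := hdom M' hM'match hcard
  omega
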